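/- Under the combined setting: 𝒲 symmetric positive definite (r+s)×(r+s), Π ∈ ℝ^{(r+s)×p} full column rank with Γ = SᵀΠ where S = (I_r,0)ᵀ, Φ ∈ ℝ^{k×p} full row rank, Σᴿ = (Πᵀ𝒲⁻¹Π)⁻¹, 𝒞ᴿ = Σᴿ - ΣᴿΦᵀ(ΦΣᴿΦᵀ)⁻¹ΦΣᴿ, 𝒫ᴿ = 𝒲⁻¹ - 𝒲⁻¹Π𝒞ᴿΠᵀ𝒲⁻¹, W = Sᵀ𝒲S (assumed positive definite), Σ = (ΓᵀW⁻¹Γ)⁻¹ (Γ full column rank), and 𝒫 = W⁻¹ - W⁻¹ΓΣΓᵀW⁻¹. Then trace(𝒲 (𝒫ᴿ - S 𝒫 Sᵀ)) = s + k. -/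

import Mathlib

open Matrix

lemma mulVec_inj_of_rank {m n : Type*} [Fintype m] [Fintype n] [DecidableEq n]
    (A : Matrix m n ℝ) (hA : A.rank = Fintype.card n) :
    ∀ x : n → ℝ, A *ᵥ x = 0 → x = 0 := by
  intro x hx
  have h1 := A.mulVecLin.finrank_range_add_finrank_ker
  rw [Matrix.rank] at hA
  rw [hA, Module.finrank_pi] at h1
  have hker : Module.finrank ℝ (LinearMap.ker A.mulVecLin) = 0 := by omega
  have hbot : LinearMap.ker A.mulVecLin = ⊥ := Submodule.finrank_eq_zero.mp hker
  have hx' : x ∈ LinearMap.ker A.mulVecLin := by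
    simpa [Matrix.mulVecLin] using hx
  rw [hbot] at hx'
  simpa using hx'

lemma posDef_tmul {m n : Type*} [Fintype m] [Fintype n] [DecidableEq n]
    {A : Matrix m m ℝ} (hA : A.PosDef) (B : Matrix m n ℝ)
    (hB : ∀ x : n → ℝ, B *ᵥ x = 0 → x = 0) : (Bᵀ * A * B).PosDef := by
  refine Matrix.PosDef.of_dotProduct_mulVec_pos ?_ ?_
  · have := Matrix.isHermitian_conjTranspose_mul_mul B hA.1
    simpa using this
  · intro x hx
    have hBx : B *ᵥ x ≠ 0 := fun h => hx (hB x h)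
    have h2 := hA.dotProduct_mulVec_pos hBx
    have key : x ⬝ᵥ ((Bᵀ * A * B) *ᵥ x) = (B *ᵥ x) ⬝ᵥ (A *ᵥ (B *ᵥ x)) := by
      rw [← mulVec_mulVec, ← mulVec_mulVec, dotProduct_mulVec x Bᵀ, vecMul_transpose]
    simpa [key] using h2

lemma isUnit_det_of_posDef {n : Type*} [Fintype n] [DecidableEq n]
    {M : Matrix n n ℝ} (h : M.PosDef) : IsUnit M.det :=
  isUnit_iff_ne_zero.mpr h.det_pos.ne'

theorem stmt_11 (r s p k : ℕ)
    (𝒲 : Matrix (Fin (r + s)) (Fin (r + s)) ℝ) (h𝒲 : 𝒲.PosDef)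
    (Pim : Matrix (Fin (r + s)) (Fin p) ℝ) (hPim : Pim.rank = p)
    (Φ : Matrix (Fin k) (Fin p) ℝ) (hΦ : Φ.rank = k) :
    let S : Matrix (Fin (r + s)) (Fin r) ℝ :=
      Matrix.of fun i j => if (i : ℕ) = (j : ℕ) then (1 : ℝ) else 0
    let Γ : Matrix (Fin r) (Fin p) ℝ := Sᵀ * Pim
    let SR : Matrix (Fin p) (Fin p) ℝ := (Pimᵀ * 𝒲⁻¹ * Pim)⁻¹
    let CR : Matrix (Fin p) (Fin p) ℝ := SR - SR * Φᵀ * (Φ * SR * Φᵀ)⁻¹ * Φ * SR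
    let PR : Matrix (Fin (r + s)) (Fin (r + s)) ℝ := 𝒲⁻¹ - 𝒲⁻¹ * Pim * CR * Pimᵀ * 𝒲⁻¹
    let W : Matrix (Fin r) (Fin r) ℝ := Sᵀ * 𝒲 * S
    W.PosDef → Γ.rank = p →
      let Sg : Matrix (Fin p) (Fin p) ℝ := (Γᵀ * W⁻¹ * Γ)⁻¹
      let P : Matrix (Fin r) (Fin r) ℝ := W⁻¹ - W⁻¹ * Γ * Sg * Γᵀ * W⁻¹
      (𝒲 * (PR - S * P * Sᵀ)).trace = (s : ℝ) + (k : ℝ) := by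
  intro S Γ SR CR PR W hW hΓ Sg P
  -- basic posdef / invertibility facts
  have h𝒲i : 𝒲⁻¹.PosDef := h𝒲.inv
  have hPiminj : ∀ x : Fin p → ℝ, Pim *ᵥ x = 0 → x = 0 :=
    mulVec_inj_of_rank Pim (by simpa using hPim)
  have hA : (Pimᵀ * 𝒲⁻¹ * Pim).PosDef := posDef_tmul h𝒲i Pim hPiminj
  have hSR : SR.PosDef := hA.inv
  have hΦT : ∀ x : Fin k → ℝ, Φᵀ *ᵥ x = 0 → x = 0 :=
    mulVec_inj_of_rank Φᵀ (by simpa [Matrix.rank_transpose] using hΦ)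
  have hB : (Φ * SR * Φᵀ).PosDef := by
    have := posDef_tmul hSR Φᵀ hΦT
    simpa using this
  have hWi : W⁻¹.PosDef := hW.inv
  have hΓinj : ∀ x : Fin p → ℝ, Γ *ᵥ x = 0 → x = 0 :=
    mulVec_inj_of_rank Γ (by simpa using hΓ)
  have hG : (Γᵀ * W⁻¹ * Γ).PosDef := posDef_tmul hWi Γ hΓinj
  -- inverse identities
  have h𝒲inv : 𝒲 * 𝒲⁻¹ = 1 := mul_nonsing_inv 𝒲 (isUnit_det_of_posDef h𝒲)
  have hAinv : SR * (Pimᵀ * 𝒲⁻¹ * Pim) = 1 :=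
    nonsing_inv_mul _ (isUnit_det_of_posDef hA)
  have hBinv : (Φ * SR * Φᵀ)⁻¹ * (Φ * SR * Φᵀ) = 1 :=
    nonsing_inv_mul _ (isUnit_det_of_posDef hB)
  have hWinv : W * W⁻¹ = 1 := mul_nonsing_inv W (isUnit_det_of_posDef hW)
  have hGinv : Sg * (Γᵀ * W⁻¹ * Γ) = 1 :=
    nonsing_inv_mul _ (isUnit_det_of_posDef hG)
  -- first trace: trace (𝒲 * PR) = (r+s) - (p - k)
  have t1 : (𝒲 * PR).trace = ((r : ℝ) + s) - ((p : ℝ) - k) := by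
    have e1 : 𝒲 * PR = 1 - Pim * CR * Pimᵀ * 𝒲⁻¹ := by
      show 𝒲 * (𝒲⁻¹ - 𝒲⁻¹ * Pim * CR * Pimᵀ * 𝒲⁻¹) = _
      rw [Matrix.mul_sub]
      rw [h𝒲inv]
      congr 1
      calc 𝒲 * (𝒲⁻¹ * Pim * CR * Pimᵀ * 𝒲⁻¹)
          = (𝒲 * 𝒲⁻¹) * Pim * CR * Pimᵀ * 𝒲⁻¹ := by simp only [Matrix.mul_assoc, Matrix.one_mul, Matrix.mul_one]
        _ = Pim * CR * Pimᵀ * 𝒲⁻¹ := by rw [h𝒲inv]; simp only [Matrix.mul_assoc, Matrix.one_mul, Matrix.mul_one]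
    have e2 : (Pim * CR * Pimᵀ * 𝒲⁻¹).trace = (CR * (Pimᵀ * 𝒲⁻¹ * Pim)).trace := by
      rw [show Pim * CR * Pimᵀ * 𝒲⁻¹ = Pim * (CR * (Pimᵀ * 𝒲⁻¹)) by simp only [Matrix.mul_assoc, Matrix.one_mul, Matrix.mul_one],
        trace_mul_comm, show CR * (Pimᵀ * 𝒲⁻¹) * Pim = CR * (Pimᵀ * 𝒲⁻¹ * Pim) by simp only [Matrix.mul_assoc, Matrix.one_mul, Matrix.mul_one]]
    have e3 : CR * (Pimᵀ * 𝒲⁻¹ * Pim) = 1 - SR * Φᵀ * (Φ * SR * Φᵀ)⁻¹ * Φ := by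
      show (SR - SR * Φᵀ * (Φ * SR * Φᵀ)⁻¹ * Φ * SR) * (Pimᵀ * 𝒲⁻¹ * Pim) = _
      rw [Matrix.sub_mul, hAinv]
      congr 1
      calc SR * Φᵀ * (Φ * SR * Φᵀ)⁻¹ * Φ * SR * (Pimᵀ * 𝒲⁻¹ * Pim)
          = SR * Φᵀ * (Φ * SR * Φᵀ)⁻¹ * Φ * (SR * (Pimᵀ * 𝒲⁻¹ * Pim)) := by simp only [Matrix.mul_assoc, Matrix.one_mul, Matrix.mul_one]
        _ = SR * Φᵀ * (Φ * SR * Φᵀ)⁻¹ * Φ := by rw [hAinv]; simp only [Matrix.mul_assoc, Matrix.one_mul, Matrix.mul_one]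
    have e4 : (SR * Φᵀ * (Φ * SR * Φᵀ)⁻¹ * Φ).trace = (k : ℝ) := by
      rw [show SR * Φᵀ * (Φ * SR * Φᵀ)⁻¹ * Φ = (SR * Φᵀ) * ((Φ * SR * Φᵀ)⁻¹ * Φ) by simp only [Matrix.mul_assoc, Matrix.one_mul, Matrix.mul_one],
        trace_mul_comm,
        show (Φ * SR * Φᵀ)⁻¹ * Φ * (SR * Φᵀ) = (Φ * SR * Φᵀ)⁻¹ * (Φ * SR * Φᵀ) by simp only [Matrix.mul_assoc, Matrix.one_mul, Matrix.mul_one],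
        hBinv, trace_one]
      simp
    rw [e1, trace_sub, trace_one, e2, e3, trace_sub, trace_one, e4]
    simp only [Fintype.card_fin]
    push_cast
    ring
  -- second trace: trace (𝒲 * (S * P * Sᵀ)) = r - p
  have t2 : (𝒲 * (S * P * Sᵀ)).trace = (r : ℝ) - p := by
    have e1 : (𝒲 * (S * P * Sᵀ)).trace = (W * P).trace := by
      rw [show 𝒲 * (S * P * Sᵀ) = (𝒲 * S * P) * Sᵀ by simp only [Matrix.mul_assoc, Matrix.one_mul, Matrix.mul_one], trace_mul_comm,
        show Sᵀ * (𝒲 * S * P) = (Sᵀ * 𝒲 * S) * P by simp only [Matrix.mul_assoc, Matrix.one_mul, Matrix.mul_one]]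
    have e2 : W * P = 1 - Γ * Sg * Γᵀ * W⁻¹ := by
      show W * (W⁻¹ - W⁻¹ * Γ * Sg * Γᵀ * W⁻¹) = _
      rw [Matrix.mul_sub, hWinv]
      congr 1
      calc W * (W⁻¹ * Γ * Sg * Γᵀ * W⁻¹)
          = (W * W⁻¹) * Γ * Sg * Γᵀ * W⁻¹ := by simp only [Matrix.mul_assoc, Matrix.one_mul, Matrix.mul_one]
        _ = Γ * Sg * Γᵀ * W⁻¹ := by rw [hWinv]; simp only [Matrix.mul_assoc, Matrix.one_mul, Matrix.mul_one]
    have e3 : (Γ * Sg * Γᵀ * W⁻¹).trace = (p : ℝ) := by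
      rw [show Γ * Sg * Γᵀ * W⁻¹ = Γ * (Sg * (Γᵀ * W⁻¹)) by simp only [Matrix.mul_assoc, Matrix.one_mul, Matrix.mul_one], trace_mul_comm,
        show Sg * (Γᵀ * W⁻¹) * Γ = Sg * (Γᵀ * W⁻¹ * Γ) by simp only [Matrix.mul_assoc, Matrix.one_mul, Matrix.mul_one], hGinv, trace_one]
      simp
    rw [e1, e2, trace_sub, trace_one, e3]
    simp
  have : 𝒲 * (PR - S * P * Sᵀ) = 𝒲 * PR - 𝒲 * (S * P * Sᵀ) := by
    rw [Matrix.mul_sub]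
  rw [this, trace_sub, t1, t2]
  ring
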